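/- (Linear elimination lemma) Let d ∈ ℕ, f ∈ ℝ[x]_d, and let ℓ_1, ..., ℓ_t be linear polynomials such that f lies in the ideal generated by ℓ_1, ..., ℓ_t. Then either there exist polynomials p_1, ..., p_t of degree at most d-1 with f = p_1 ℓ_1 + ... + p_t ℓ_t, or there exist real numbers λ_1, ..., λ_t with λ_1 ℓ_1 + ... + λ_t ℓ_t = 1. -/

import Mathlib

open MvPolynomial Matrix
attribute [local instance] Matrix.frobeniusNormedAddCommGroup

noncomputable section

abbrev RP (n : ℕ) := MvPolynomial (Fin n) ℝ

/-- Evaluation of the linear pencil `A₀ + ∑ xᵢ Aᵢ` at a point `x ∈ ℝⁿ`. -/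
def pencilEval {n α : ℕ} (A0 : Matrix (Fin α) (Fin α) ℝ) (A : Fin n → Matrix (Fin α) (Fin α) ℝ)
    (x : Fin n → ℝ) : Matrix (Fin α) (Fin α) ℝ :=
  A0 + ∑ i, x i • A i

/-- The linear pencil `A₀ + ∑ xᵢ Aᵢ` as a matrix of polynomials. -/
def pencilPoly {n α : ℕ} (A0 : Matrix (Fin α) (Fin α) ℝ) (A : Fin n → Matrix (Fin α) (Fin α) ℝ) :
    Matrix (Fin α) (Fin α) (RP n) :=
  A0.map C + ∑ i, (X i : RP n) • (A i).map C

/-- `v^* M v` for a matrix of polynomials. -/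
def quadForm {n α : ℕ} (M : Matrix (Fin α) (Fin α) (RP n)) (v : Fin α → RP n) : RP n :=
  v ⬝ᵥ (M *ᵥ v)

/-- A sum of squares of polynomials. -/
def IsSos {n : ℕ} (p : RP n) : Prop := ∃ (k : ℕ) (q : Fin k → RP n), p = ∑ i, q i ^ 2

/-- An sos-matrix: a finite sum `∑ vⱼ vⱼ^*` with `vⱼ` vectors of polynomials. -/
def IsSosMatrix {n α : ℕ} (S : Matrix (Fin α) (Fin α) (RP n)) : Prop :=
  ∃ (k : ℕ) (v : Fin k → Fin α → RP n), S = ∑ j, Matrix.vecMulVec (v j) (v j)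

/-- Membership in the quadratic module `M_A` associated to the pencil. -/
def InQuadModule {n α : ℕ} (A0 : Matrix (Fin α) (Fin α) ℝ)
    (A : Fin n → Matrix (Fin α) (Fin α) ℝ) (p : RP n) : Prop :=
  ∃ s, IsSos s ∧ ∃ (k : ℕ) (v : Fin k → Fin α → RP n),
    p = s + ∑ j, quadForm (pencilPoly A0 A) (v j)

/-- Strong infeasibility: positive distance (Frobenius norm) between the range of the
pencil and the PSD cone. -/
def StronglyInfeasible {n α : ℕ} (A0 : Matrix (Fin α) (Fin α) ℝ)
    (A : Fin n → Matrix (Fin α) (Fin α) ℝ) : Prop :=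
  ∃ ε > (0:ℝ), ∀ (x : Fin n → ℝ) (B : Matrix (Fin α) (Fin α) ℝ), B.PosSemidef →
    ε ≤ dist (pencilEval A0 A x) B


lemma aux_deg_aeval {n : ℕ} (g : Fin n → RP n) (hg : ∀ i, (g i).totalDegree ≤ 1)
    (p : RP n) : (aeval g p).totalDegree ≤ p.totalDegree := by
  conv_lhs => rw [p.as_sum, map_sum]
  apply (totalDegree_finset_sum _ _).trans
  apply Finset.sup_le
  intro m hm
  rw [aeval_monomial]
  apply (totalDegree_mul _ _).trans
  have h1 : (algebraMap ℝ (RP n) (coeff m p)).totalDegree = 0 := totalDegree_C _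
  rw [h1, zero_add]
  calc (m.prod fun i e => g i ^ e).totalDegree
      ≤ ∑ i ∈ m.support, (g i ^ m i).totalDegree := by
        apply totalDegree_finset_prod
    _ ≤ ∑ i ∈ m.support, m i := by
        apply Finset.sum_le_sum
        intro i _
        exact (totalDegree_pow _ _).trans (by
          calc m i * (g i).totalDegree ≤ m i * 1 := Nat.mul_le_mul_left _ (hg i)
          _ = m i := Nat.mul_one _)
    _ ≤ p.totalDegree := le_totalDegree hm

lemma aux_hc_mul {n : ℕ} (g l : RP n) (hl : l.IsHomogeneous 1) (e : ℕ) :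
    homogeneousComponent (e+1) (g * l) = homogeneousComponent e g * l := by
  conv_lhs => rw [← g.sum_homogeneousComponent]
  rw [Finset.sum_mul, map_sum]
  have key : ∀ k, homogeneousComponent (e+1) (homogeneousComponent k g * l)
      = if e = k then homogeneousComponent k g * l else 0 := by
    intro k
    have hmem : homogeneousComponent k g * l ∈ homogeneousSubmodule (Fin n) ℝ (k+1) :=
      (homogeneousComponent_isHomogeneous k g).mul hl
    rw [homogeneousComponent_of_mem hmem]
    simp only [Nat.add_right_cancel_iff]
  simp_rw [key]
  rw [Finset.sum_ite_eq (Finset.range (g.totalDegree + 1)) e]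
  by_cases he : e ∈ Finset.range (g.totalDegree + 1)
  · rw [if_pos he]
  · rw [if_neg he]
    rw [Finset.mem_range, not_lt] at he
    rw [homogeneousComponent_eq_zero _ _ (by omega), zero_mul]

lemma aux_hc_zero_mul {n : ℕ} (g l : RP n) (hl : l.IsHomogeneous 1) :
    homogeneousComponent 0 (g * l) = 0 := by
  rw [homogeneousComponent_zero]
  have h0 : coeff 0 l = 0 := by
    by_contra h
    have := hl h
    simp [map_zero] at this
  have : coeff 0 (g * l) = coeff 0 g * coeff 0 l := by
    simp only [← constantCoeff_eq]
    exact map_mul constantCoeff g l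
  rw [this, h0, mul_zero, map_zero]


lemma aux_deg_mem {n : ℕ} {l : RP n} (hl : l.totalDegree ≤ 1) {m : Fin n →₀ ℕ}
    (hm : coeff m l ≠ 0) : m.degree ≤ 1 := by
  have h1 : m.sum (fun _ e => e) ≤ l.totalDegree :=
    le_totalDegree (by rwa [mem_support_iff])
  have h2 : m.sum (fun _ e => e) = m.degree := rfl
  omega

lemma aux_single_or {n : ℕ} (m : Fin n →₀ ℕ) (hm : m.degree ≤ 1) :
    m = 0 ∨ ∃ j, m = Finsupp.single j 1 := by
  rcases Nat.le_one_iff_eq_zero_or_eq_one.mp hm with h | h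
  · left; exact (Finsupp.degree_eq_zero_iff m).mp h
  · right
    have hne : m ≠ 0 := by
      intro h0; rw [h0, map_zero] at h; omega
    obtain ⟨j, hj⟩ := Finsupp.ne_iff.mp hne
    simp only [Finsupp.coe_zero, Pi.zero_apply] at hj
    refine ⟨j, ?_⟩
    have hjle : m j ≤ m.degree := Finsupp.le_degree j m
    have hj1 : m j = 1 := by omega
    ext k
    rcases eq_or_ne k j with rfl | hk
    · simp [hj1]
    · rw [Finsupp.single_eq_of_ne' (Ne.symm hk)]
      by_contra hk0
      have hsub : ({k, j} : Finset (Fin n)) ⊆ m.support := by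
        intro x hx
        rw [Finset.mem_insert, Finset.mem_singleton] at hx
        rcases hx with rfl | rfl <;> rw [Finsupp.mem_support_iff] <;> omega
      have hle : ∑ i ∈ ({k, j} : Finset (Fin n)), m i ≤ m.degree :=
        Finset.sum_le_sum_of_subset hsub
      rw [Finset.sum_pair hk] at hle
      omega

lemma aux_single_degree {n : ℕ} (j : Fin n) :
    (Finsupp.single j 1 : Fin n →₀ ℕ).degree = 1 := by
  simp [Finsupp.degree_single]

lemma aux_linear_decomp {n : ℕ} (l : RP n) (hl : l.totalDegree ≤ 1) :
    l = C (coeff 0 l) + ∑ j, C (coeff (Finsupp.single j 1) l) * X j := by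
  apply MvPolynomial.ext
  intro m
  rw [coeff_add, coeff_C, coeff_sum]
  have hX : ∀ j : Fin n, coeff m (C (coeff (Finsupp.single j 1) l) * X j)
      = coeff (Finsupp.single j 1) l * (if Finsupp.single j 1 = m then 1 else 0) := by
    intro j
    classical
    rw [coeff_C_mul, coeff_X']
  simp_rw [hX]
  have hs0 : ∀ j : Fin n, (Finsupp.single j 1 : Fin n →₀ ℕ) ≠ 0 := by
    intro j h
    exact one_ne_zero (Finsupp.single_eq_zero.mp h)
  by_cases h0 : m = 0
  · subst h0
    rw [if_pos rfl]
    have : ∀ j : Fin n, coeff (Finsupp.single j 1) l *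
        (if (Finsupp.single j 1 : Fin n →₀ ℕ) = 0 then (1:ℝ) else 0) = 0 := by
      intro j; rw [if_neg (hs0 j), mul_zero]
    simp_rw [this, Finset.sum_const_zero, add_zero]
  · rw [if_neg (fun h => h0 h.symm), zero_add]
    by_cases hsing : ∃ j, m = Finsupp.single j 1
    · obtain ⟨j, rfl⟩ := hsing
      rw [Finset.sum_eq_single j]
      · rw [if_pos rfl, mul_one]
      · intro j' _ hj'
        rw [if_neg, mul_zero]
        intro h
        exact hj' (Finsupp.single_left_injective one_ne_zero h)
      · intro h; exact absurd (Finset.mem_univ j) h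
    · push_neg at hsing
      have hml : coeff m l = 0 := by
        by_contra h
        rcases aux_single_or m (aux_deg_mem hl h) with h' | ⟨j, h'⟩
        · exact h0 h'
        · exact hsing j h'
      rw [hml]
      symm
      apply Finset.sum_eq_zero
      intro j _
      rw [if_neg (fun h => hsing j h.symm), mul_zero]

lemma aux_trunc {n t : ℕ} (d : ℕ) (f : RP n) (hf : f.totalDegree ≤ d)
    (l : Fin t → RP n) (hl : ∀ i, (l i).IsHomogeneous 1)
    (g : Fin t → RP n) (hfg : f = ∑ i, g i * l i) :
    f = ∑ i, (∑ e ∈ Finset.range d, homogeneousComponent e (g i)) * l i := by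
  have hsum : f = ∑ e ∈ Finset.range (d+1), homogeneousComponent e f := by
    conv_lhs => rw [← f.sum_homogeneousComponent]
    apply Finset.sum_subset
    · intro e he
      rw [Finset.mem_range] at he ⊢
      omega
    · intro e _ he
      rw [Finset.mem_range, not_lt] at he
      exact homogeneousComponent_eq_zero _ _ (by omega)
  calc f = ∑ e ∈ Finset.range (d+1), homogeneousComponent e f := hsum
    _ = ∑ e ∈ Finset.range (d+1), ∑ i, homogeneousComponent e (g i * l i) := by
        apply Finset.sum_congr rfl
        intro e _
        rw [hfg, map_sum]
    _ = ∑ i, ∑ e ∈ Finset.range (d+1), homogeneousComponent e (g i * l i) :=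
        Finset.sum_comm
    _ = ∑ i, (∑ e ∈ Finset.range d, homogeneousComponent e (g i)) * l i := by
        apply Finset.sum_congr rfl
        intro i _
        rw [Finset.sum_range_succ']
        rw [aux_hc_zero_mul _ _ (hl i), add_zero, Finset.sum_mul]
        apply Finset.sum_congr rfl
        intro e _
        rw [aux_hc_mul _ _ (hl i)]



lemma aux_exists_lam {n t : ℕ} (ℓ : Fin t → RP n) (hℓ : ∀ i, (ℓ i).totalDegree ≤ 1)
    (h : ¬ ∃ x : Fin n → ℝ, ∀ i, eval x (ℓ i) = 0) :
    ∃ lam : Fin t → ℝ, (∑ i, C (lam i) * ℓ i) = 1 := by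
  classical
  set a : Matrix (Fin t) (Fin n) ℝ := fun i j => coeff (Finsupp.single j 1) (ℓ i) with ha
  set b : Fin t → ℝ := fun i => coeff 0 (ℓ i) with hb
  have heval : ∀ (x : Fin n → ℝ) i, eval x (ℓ i) = b i + ∑ j, a i j * x j := by
    intro x i
    conv_lhs => rw [aux_linear_decomp (ℓ i) (hℓ i)]
    simp [a, b]
  set K : Submodule ℝ (Fin t → ℝ) := LinearMap.range a.mulVecLin with hK
  have hnb : -b ∉ K := by
    intro hmem
    obtain ⟨x, hx⟩ := hmem
    apply h
    refine ⟨x, fun i => ?_⟩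
    have hxi : a.mulVec x i = -b i := by
      rw [show a.mulVec x = a.mulVecLin x from rfl, hx]; rfl
    have hxi' : ∑ j, a i j * x j = -b i := by
      rw [← hxi]; rfl
    rw [heval, hxi']; ring
  have hq : (K.mkQ) (-b) ≠ 0 := by
    rw [Submodule.mkQ_apply, ne_eq, Submodule.Quotient.mk_eq_zero]
    exact hnb
  have : ¬ ∀ ψ : Module.Dual ℝ ((Fin t → ℝ) ⧸ K), ψ (K.mkQ (-b)) = 0 := by
    rw [Module.forall_dual_apply_eq_zero_iff ℝ]
    exact hq
  push_neg at this
  obtain ⟨ψ, hψ⟩ := this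
  set φ : (Fin t → ℝ) →ₗ[ℝ] ℝ := (ψ (K.mkQ (-b)))⁻¹ • (ψ ∘ₗ K.mkQ) with hφ
  have hφb : φ (-b) = 1 := by
    simp only [hφ, LinearMap.smul_apply, LinearMap.comp_apply, smul_eq_mul]
    exact inv_mul_cancel₀ hψ
  have hφK : ∀ v ∈ K, φ v = 0 := by
    intro v hv
    simp only [hφ, LinearMap.smul_apply, LinearMap.comp_apply, Submodule.mkQ_apply,
      (Submodule.Quotient.mk_eq_zero K).mpr hv, map_zero, smul_eq_mul, mul_zero]
  set lam : Fin t → ℝ := fun i => -(φ (Pi.single i 1)) with hlam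
  have hv : ∀ v : Fin t → ℝ, v = ∑ i, v i • (Pi.single i 1 : Fin t → ℝ) := by
    intro v
    funext k
    rw [Finset.sum_apply]
    simp [Pi.single_apply, Finset.sum_ite_eq]
  have hexp : ∀ v : Fin t → ℝ, φ v = ∑ i, v i * (-(lam i)) := by
    intro v
    conv_lhs => rw [hv v]
    rw [map_sum]
    simp [hlam]
  have hcol : ∀ j, ∑ i, a i j * (-(lam i)) = 0 := by
    intro j
    have hmem : (fun i => a i j) ∈ K := by
      refine ⟨Pi.single j 1, ?_⟩
      funext i
      simp [Matrix.mulVecLin_apply, Matrix.mulVec, dotProduct, Pi.single_apply]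
    have h1 := hφK _ hmem
    rw [hexp] at h1
    exact h1
  have hbsum : ∑ i, lam i * b i = 1 := by
    have := hφb
    rw [hexp] at this
    simp only [Pi.neg_apply] at this
    rw [← this]
    apply Finset.sum_congr rfl
    intro i _
    ring
  refine ⟨lam, ?_⟩
  calc ∑ i, C (lam i) * ℓ i
      = ∑ i, (C (lam i * b i) + ∑ j, C (lam i * a i j) * X j) := by
        apply Finset.sum_congr rfl
        intro i _
        conv_lhs => rw [aux_linear_decomp (ℓ i) (hℓ i)]
        rw [mul_add, Finset.mul_sum]
        congr 1
        · rw [← C_mul]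
        · apply Finset.sum_congr rfl
          intro j _
          rw [← mul_assoc, ← C_mul]
    _ = C (∑ i, lam i * b i) + ∑ j, C (∑ i, lam i * a i j) * X j := by
        rw [Finset.sum_add_distrib, map_sum, Finset.sum_comm]
        congr 1
        apply Finset.sum_congr rfl
        intro j _
        rw [map_sum, Finset.sum_mul]
    _ = 1 := by
        have : ∀ j : Fin n, (∑ i, lam i * a i j) = 0 := by
          intro j
          have h1 := hcol j
          have h2 : ∑ i, lam i * a i j = -∑ i, a i j * (-(lam i)) := by
            rw [← Finset.sum_neg_distrib]
            apply Finset.sum_congr rfl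
            intro i _
            ring
          rw [h2, h1, neg_zero]
        simp_rw [this, hbsum, C_0, zero_mul, Finset.sum_const_zero, add_zero, C_1]
/-- Linear elimination lemma. -/
theorem stmt_11 {n t : ℕ} (d : ℕ) (hd : 1 ≤ d) (f : RP n) (hf : f.totalDegree ≤ d)
    (ℓ : Fin t → RP n) (hℓ : ∀ i, (ℓ i).totalDegree ≤ 1)
    (hmem : f ∈ Ideal.span (Set.range ℓ)) :
    (∃ p : Fin t → RP n, (∀ i, (p i).totalDegree ≤ d - 1) ∧ f = ∑ i, p i * ℓ i) ∨
    (∃ lam : Fin t → ℝ, (∑ i, C (lam i) * ℓ i) = 1) := by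
  by_cases hx : ∃ x : Fin n → ℝ, ∀ i, eval x (ℓ i) = 0
  · obtain ⟨x0, hx0⟩ := hx
    left
    classical
    set u : Fin n → RP n := fun i => X i + C (x0 i) with hu_def
    set w : Fin n → RP n := fun i => X i - C (x0 i) with hw_def
    have hu : ∀ i, (u i).totalDegree ≤ 1 := by
      intro i
      apply (totalDegree_add _ _).trans
      simp [totalDegree_X, totalDegree_C]
    have hw : ∀ i, (w i).totalDegree ≤ 1 := by
      intro i
      show (X i - C (x0 i) : RP n).totalDegree ≤ 1
      rw [sub_eq_add_neg, ← map_neg]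
      apply (totalDegree_add _ _).trans
      simp [totalDegree_X, totalDegree_C]
    have hwu : ∀ p : RP n, aeval w (aeval u p) = p := by
      intro p
      rw [← AlgHom.comp_apply, comp_aeval]
      have : (fun i => aeval w (u i)) = (X : Fin n → RP n) := by
        funext i
        show aeval w (X i + C (x0 i)) = X i
        rw [map_add, aeval_X, aeval_C]
        show w i + C (x0 i) = X i
        rw [hw_def]
        ring
      rw [this, aeval_X_left_apply]
    obtain ⟨g, hg⟩ := (Submodule.mem_span_range_iff_exists_fun (RP n)).mp hmem
    set l' : Fin t → RP n := fun i => aeval u (ℓ i) with hl'_def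
    set g' : Fin t → RP n := fun i => aeval u (g i) with hg'_def
    have hf' : aeval u f = ∑ i, g' i * l' i := by
      rw [← hg, map_sum]
      apply Finset.sum_congr rfl
      intro i _
      rw [smul_eq_mul, _root_.map_mul]
    have hl'deg : ∀ i, (l' i).totalDegree ≤ 1 :=
      fun i => (aux_deg_aeval u hu _).trans (hℓ i)
    have hl'0 : ∀ i, coeff 0 (l' i) = 0 := by
      intro i
      have h1 : eval (0 : Fin n → ℝ) (l' i) = eval x0 (ℓ i) := by
        rw [show (eval (0 : Fin n → ℝ)) (aeval u (ℓ i))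
            = aeval (0 : Fin n → ℝ) (aeval u (ℓ i)) from rfl,
          ← AlgHom.comp_apply, comp_aeval]
        have : (fun i => aeval (0 : Fin n → ℝ) (u i)) = x0 := by
          funext j
          simp [hu_def]
        rw [this]
        rfl
      rw [hx0 i] at h1
      rw [← constantCoeff_eq, ← eval_zero]
      exact h1
    have hl'hom : ∀ i, (l' i).IsHomogeneous 1 := by
      intro i m hm
      have hdeg : m.degree ≤ 1 := aux_deg_mem (hl'deg i) hm
      have hne : m ≠ 0 := by
        intro h0
        rw [h0] at hm
        exact hm (hl'0 i)
      have h1 : m.degree ≠ 0 := fun h => hne ((Finsupp.degree_eq_zero_iff m).mp h)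
      rw [show (1 : Fin n → ℕ) = fun _ => 1 from rfl, ← Finsupp.degree_eq_weight_one]
      omega
    have hfdeg' : (aeval u f).totalDegree ≤ d := (aux_deg_aeval u hu f).trans hf
    have hkey := aux_trunc d (aeval u f) hfdeg' l' hl'hom g' hf'
    set p' : Fin t → RP n := fun i => ∑ e ∈ Finset.range d, homogeneousComponent e (g' i)
      with hp'_def
    have hp'deg : ∀ i, (p' i).totalDegree ≤ d - 1 := by
      intro i
      apply (totalDegree_finset_sum _ _).trans
      apply Finset.sup_le
      intro e he
      rw [Finset.mem_range] at he
      exact ((homogeneousComponent_isHomogeneous e (g' i)).totalDegree_le).trans (by omega)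
    refine ⟨fun i => aeval w (p' i), fun i => (aux_deg_aeval w hw _).trans (hp'deg i), ?_⟩
    calc f = aeval w (aeval u f) := (hwu f).symm
      _ = aeval w (∑ i, p' i * l' i) := by rw [← hkey]
      _ = ∑ i, aeval w (p' i) * ℓ i := by
          rw [map_sum]
          apply Finset.sum_congr rfl
          intro i _
          rw [_root_.map_mul]
          congr 1
          exact hwu (ℓ i)
  · right
    exact aux_exists_lam ℓ hℓ hx
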